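/- arXiv:0806.4423 — 4 statements merged into one kernel-verified Lean document; each statement's English description precedes it below -/
import Mathlib

section
/- If x, y ∈ ℝ^D have non-negative entries, then (∑ x_i^5)(∑ y_i^3) + (∑ x_i^3)(∑ y_i^5) ≥ (∑ x_i^4)(∑ y_i^4). -/
open Finset

theorem marginal_power_ineq (D : ℕ) (x y : Fin D → ℝ)
    (hx : ∀ i, 0 ≤ x i) (hy : ∀ i, 0 ≤ y i) :
    (∑ i, (x i) ^ 4) * (∑ i, (y i) ^ 4) ≤
      (∑ i, (x i) ^ 5) * (∑ i, (y i) ^ 3) + (∑ i, (x i) ^ 3) * (∑ i, (y i) ^ 5) := by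
  rw [Finset.sum_mul_sum, Finset.sum_mul_sum, Finset.sum_mul_sum, ← Finset.sum_add_distrib]
  apply Finset.sum_le_sum
  intro i _
  rw [← Finset.sum_add_distrib]
  apply Finset.sum_le_sum
  intro j _
  nlinarith [mul_nonneg (mul_nonneg (pow_nonneg (hx i) 3) (pow_nonneg (hy j) 3)) (sq_nonneg (x i - y j)),
    mul_nonneg (pow_nonneg (hx i) 4) (pow_nonneg (hy j) 4)]
end

section
/- Let r_1, ..., r_D be i.i.d. standard normal random variables and x, y ∈ ℝ^D. Define u_1 = ∑ x_i r_i, u_2 = ∑ x_i^2 r_i, u_3 = ∑ x_i^3 r_i, v_1 = ∑ y_i r_i, v_2 = ∑ y_i^2 r_i, v_3 = ∑ y_i^3 r_i, and the single-sample estimator X = ∑ x_i^4 + ∑ y_i^4 + 6 u_2 v_2 - 4 u_3 v_1 - 4 u_1 v_3. Then E[X] = ∑_{i=1}^D (x_i - y_i)^4. -/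
open Finset MeasureTheory ProbabilityTheory

section Aux

variable {Ω : Type*} [MeasurableSpace Ω] (μ : Measure Ω) [IsProbabilityMeasure μ]
  {D : ℕ} (r : Fin D → Ω → ℝ)

lemma aux_int_sq (hmeas : ∀ i, Measurable (r i))
    (h2 : ∀ i, ∫ ω, (r i ω) ^ 2 ∂μ = 1) (i : Fin D) :
    Integrable (fun ω => (r i ω) ^ 2) μ := by
  by_contra h
  have := integral_undef (μ := μ) (f := fun ω => (r i ω) ^ 2) h
  rw [h2 i] at this
  norm_num at this

lemma aux_int (hmeas : ∀ i, Measurable (r i))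
    (h2 : ∀ i, ∫ ω, (r i ω) ^ 2 ∂μ = 1) (i : Fin D) :
    Integrable (r i) μ := by
  have hm : MemLp (r i) 2 μ := by
    rw [memLp_two_iff_integrable_sq (hmeas i).aestronglyMeasurable]
    exact aux_int_sq μ r hmeas h2 i
  exact hm.integrable (by norm_num)

lemma aux_int_mul (hmeas : ∀ i, Measurable (r i))
    (hindep : iIndepFun r μ)
    (h2 : ∀ i, ∫ ω, (r i ω) ^ 2 ∂μ = 1) (i j : Fin D) :
    Integrable (fun ω => r i ω * r j ω) μ := by
  rcases eq_or_ne i j with rfl | hij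
  · simpa [pow_two] using aux_int_sq μ r hmeas h2 i
  · exact (hindep.indepFun hij).integrable_mul (aux_int μ r hmeas h2 i)
      (aux_int μ r hmeas h2 j)

lemma aux_key (hmeas : ∀ i, Measurable (r i))
    (hindep : iIndepFun r μ)
    (h1 : ∀ i, ∫ ω, r i ω ∂μ = 0)
    (h2 : ∀ i, ∫ ω, (r i ω) ^ 2 ∂μ = 1) (a b : Fin D → ℝ) :
    ∫ ω, (∑ i, a i * r i ω) * (∑ j, b j * r j ω) ∂μ = ∑ i, a i * b i := by
  have hexp : ∀ ω : Ω, (∑ i, a i * r i ω) * (∑ j, b j * r j ω)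
      = ∑ i, ∑ j, (a i * b j) * (r i ω * r j ω) := by
    intro ω
    rw [Finset.sum_mul_sum]
    congr 1; ext i; congr 1; ext j; ring
  simp only [hexp]
  rw [integral_finset_sum]
  · have : ∀ i : Fin D, (∫ ω, ∑ j, (a i * b j) * (r i ω * r j ω) ∂μ)
        = a i * b i := by
      intro i
      rw [integral_finset_sum]
      · have hterm : ∀ j : Fin D, (∫ ω, (a i * b j) * (r i ω * r j ω) ∂μ)
            = if j = i then a i * b i else 0 := by
          intro j
          rw [integral_const_mul]
          rcases eq_or_ne j i with rfl | hij
          · have : (∫ ω, r j ω * r j ω ∂μ) = 1 := by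
              simpa [pow_two] using h2 j
            rw [this, mul_one, if_pos rfl]
          · simp only [if_neg hij]
            have hind := hindep.indepFun (Ne.symm hij)
            have h' : ∫ ω, (r i * r j) ω ∂μ
                = (∫ ω, r i ω ∂μ) * ∫ ω, r j ω ∂μ :=
              IndepFun.integral_mul_eq_mul_integral hind (hmeas i).aestronglyMeasurable
                (hmeas j).aestronglyMeasurable
            simp only [Pi.mul_apply] at h'
            rw [h', h1 i, zero_mul, mul_zero]
        simp only [hterm]
        simp
      · intro j _
        exact (aux_int_mul μ r hmeas hindep h2 i j).const_mul _
    simp only [this]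
  · intro i _
    apply integrable_finset_sum
    intro j _
    exact (aux_int_mul μ r hmeas hindep h2 i j).const_mul _

lemma aux_int_sum_mul_sum (hmeas : ∀ i, Measurable (r i))
    (hindep : iIndepFun r μ)
    (h2 : ∀ i, ∫ ω, (r i ω) ^ 2 ∂μ = 1) (a b : Fin D → ℝ) :
    Integrable (fun ω => (∑ i, a i * r i ω) * (∑ j, b j * r j ω)) μ := by
  have hexp : ∀ ω : Ω, (∑ i, a i * r i ω) * (∑ j, b j * r j ω)
      = ∑ i, ∑ j, (a i * b j) * (r i ω * r j ω) := by
    intro ω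
    rw [Finset.sum_mul_sum]
    congr 1; ext i; congr 1; ext j; ring
  simp only [hexp]
  apply integrable_finset_sum
  intro i _
  apply integrable_finset_sum
  intro j _
  exact (aux_int_mul μ r hmeas hindep h2 i j).const_mul _

end Aux

theorem l4_estimator_unbiased {Ω : Type*} [MeasurableSpace Ω]
    (μ : Measure Ω) [IsProbabilityMeasure μ]
    (D : ℕ) (r : Fin D → Ω → ℝ) (x y : Fin D → ℝ)
    (hmeas : ∀ i, Measurable (r i))
    (hindep : iIndepFun r μ)
    (h1 : ∀ i, ∫ ω, r i ω ∂μ = 0)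
    (h2 : ∀ i, ∫ ω, (r i ω) ^ 2 ∂μ = 1)
    (h3 : ∀ i, ∫ ω, (r i ω) ^ 3 ∂μ = 0)
    (h4 : ∀ i, ∫ ω, (r i ω) ^ 4 ∂μ = 3) :
    ∫ ω, (∑ i, (x i) ^ 4 + ∑ i, (y i) ^ 4
        + 6 * ((∑ i, (x i) ^ 2 * r i ω) * (∑ i, (y i) ^ 2 * r i ω))
        - 4 * ((∑ i, (x i) ^ 3 * r i ω) * (∑ i, y i * r i ω))
        - 4 * ((∑ i, x i * r i ω) * (∑ i, (y i) ^ 3 * r i ω))) ∂μ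
      = ∑ i, (x i - y i) ^ 4 := by
  have hP : Integrable (fun ω => (∑ i, (x i) ^ 2 * r i ω) * (∑ i, (y i) ^ 2 * r i ω)) μ :=
    aux_int_sum_mul_sum μ r hmeas hindep h2 (fun i => (x i) ^ 2) (fun i => (y i) ^ 2)
  have hQ : Integrable (fun ω => (∑ i, (x i) ^ 3 * r i ω) * (∑ i, y i * r i ω)) μ :=
    aux_int_sum_mul_sum μ r hmeas hindep h2 (fun i => (x i) ^ 3) y
  have hR : Integrable (fun ω => (∑ i, x i * r i ω) * (∑ i, (y i) ^ 3 * r i ω)) μ :=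
    aux_int_sum_mul_sum μ r hmeas hindep h2 x (fun i => (y i) ^ 3)
  have hC : Integrable (fun _ : Ω => (∑ i, (x i) ^ 4 + ∑ i, (y i) ^ 4)) μ :=
    integrable_const _
  have hA : Integrable (fun ω => (∑ i, (x i) ^ 4 + ∑ i, (y i) ^ 4)
      + 6 * ((∑ i, (x i) ^ 2 * r i ω) * (∑ i, (y i) ^ 2 * r i ω))) μ :=
    hC.add (hP.const_mul 6)
  have hB : Integrable (fun ω => (∑ i, (x i) ^ 4 + ∑ i, (y i) ^ 4)
      + 6 * ((∑ i, (x i) ^ 2 * r i ω) * (∑ i, (y i) ^ 2 * r i ω))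
      - 4 * ((∑ i, (x i) ^ 3 * r i ω) * (∑ i, y i * r i ω))) μ :=
    hA.sub (hQ.const_mul 4)
  have e1 : ∫ ω, (∑ i, (x i) ^ 2 * r i ω) * (∑ i, (y i) ^ 2 * r i ω) ∂μ
      = ∑ i, (x i) ^ 2 * (y i) ^ 2 :=
    aux_key μ r hmeas hindep h1 h2 (fun i => (x i) ^ 2) (fun i => (y i) ^ 2)
  have e2 : ∫ ω, (∑ i, (x i) ^ 3 * r i ω) * (∑ i, y i * r i ω) ∂μ
      = ∑ i, (x i) ^ 3 * y i :=
    aux_key μ r hmeas hindep h1 h2 (fun i => (x i) ^ 3) y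
  have e3 : ∫ ω, (∑ i, x i * r i ω) * (∑ i, (y i) ^ 3 * r i ω) ∂μ
      = ∑ i, x i * (y i) ^ 3 :=
    aux_key μ r hmeas hindep h1 h2 x (fun i => (y i) ^ 3)
  rw [integral_sub hB (hR.const_mul 4), integral_sub hA (hQ.const_mul 4),
    integral_add hC (hP.const_mul 6), integral_const,
    integral_const_mul, integral_const_mul, integral_const_mul, e1, e2, e3]
  simp only [measure_univ, probReal_univ, ENNReal.toReal_one, one_smul, smul_eq_mul]
  rw [Finset.mul_sum, Finset.mul_sum, Finset.mul_sum, one_mul,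
    ← Finset.sum_add_distrib, ← Finset.sum_add_distrib, ← Finset.sum_sub_distrib,
    ← Finset.sum_sub_distrib]
  congr 1; ext i; ring
end

section
/- Let r^(a), r^(b), r^(c) be three independent D-dimensional random vectors, each with i.i.d. standard normal entries, and let x, y ∈ ℝ^D. Define u_2 = ∑ x_i^2 r_i^(a), v_2 = ∑ y_i^2 r_i^(a), u_3 = ∑ x_i^3 r_i^(b), v_1 = ∑ y_i r_i^(b), u_1 = ∑ x_i r_i^(c), v_3 = ∑ y_i^3 r_i^(c). The variance of W = 6 u_2 v_2 - 4 u_3 v_1 - 4 u_1 v_3 equals 36[(∑x_i^4)(∑y_i^4) + (∑x_i^2 y_i^2)^2] + 16[(∑x_i^6)(∑y_i^2) + (∑x_i^3 y_i)^2] + 16[(∑x_i^2)(∑y_i^6) + (∑x_i y_i^3)^2]. -/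
open Finset MeasureTheory ProbabilityTheory
open scoped ENNReal

set_option linter.unusedSectionVars false
set_option maxHeartbeats 1000000

section helpers
variable {Ω : Type*} [MeasurableSpace Ω] {μ : Measure Ω} [IsProbabilityMeasure μ]

lemma mem4_of {g : Ω → ℝ} (hm : Measurable g) (hint : Integrable (fun ω => (g ω) ^ 4) μ) :
    MemLp g 4 μ := by
  have key : MemLp (fun x => ‖g x‖ ^ ((4:ℝ≥0∞)).toReal) ((4:ℝ≥0∞)/4) μ := by
    rw [ENNReal.div_self (by norm_num) (by norm_num), memLp_one_iff_integrable]
    apply hint.congr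
    filter_upwards with ω
    rw [Real.norm_eq_abs, show ((4:ℝ≥0∞)).toReal = ((4:ℕ):ℝ) by norm_num,
      Real.rpow_natCast, ← abs_pow, abs_of_nonneg (by positivity)]
  exact (memLp_norm_rpow_iff (p := 4) (q := 4) hm.aestronglyMeasurable
    (by norm_num) (by norm_num)).mp key

lemma mem2_mul {g h : Ω → ℝ} (hg : MemLp g 4 μ) (hh : MemLp h 4 μ) :
    MemLp (fun ω => g ω * h ω) 2 μ := by
  have h' : (1:ℝ≥0∞)/2 = 1/4 + 1/4 := by
    rw [ENNReal.div_add_div_same, ENNReal.div_eq_div_iff] <;> norm_num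
  haveI : ENNReal.HolderTriple 4 4 2 := ⟨by simpa only [one_div] using h'.symm⟩
  have := MemLp.smul (p := 4) (q := 4) (r := 2) hh hg
  exact this

lemma int_mul2 {g h : Ω → ℝ} (hg : MemLp g 2 μ) (hh : MemLp h 2 μ) :
    Integrable (fun ω => g ω * h ω) μ := by
  rw [← memLp_one_iff_integrable]
  have h' : (1:ℝ≥0∞)/1 = 1/2 + 1/2 := by
    rw [ENNReal.div_add_div_same, ENNReal.div_eq_div_iff] <;> norm_num
  haveI : ENNReal.HolderTriple 2 2 1 := ⟨by simpa only [one_div] using h'.symm⟩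
  have := MemLp.smul (p := 2) (q := 2) (r := 1) hh hg
  exact this

lemma int_mul4 {g1 g2 g3 g4 : Ω → ℝ} (h1 : MemLp g1 4 μ) (h2 : MemLp g2 4 μ)
    (h3 : MemLp g3 4 μ) (h4 : MemLp g4 4 μ) :
    Integrable (fun ω => g1 ω * g2 ω * g3 ω * g4 ω) μ := by
  have := int_mul2 (mem2_mul h1 h2) (mem2_mul h3 h4)
  apply this.congr
  filter_upwards with ω; ring

lemma sum_identity {κ : Type*} [Fintype κ] [DecidableEq κ] (a b c d : κ → ℝ) :
    ∑ i, ∑ j, ∑ k, ∑ l, a i * b j * c k * d l *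
        ((if i = j then (1:ℝ) else 0) * (if k = l then (1:ℝ) else 0)
          + (if i = k then (1:ℝ) else 0) * (if j = l then (1:ℝ) else 0)
          + (if i = l then (1:ℝ) else 0) * (if j = k then (1:ℝ) else 0))
      = (∑ i, a i * b i) * (∑ i, c i * d i) + (∑ i, a i * c i) * (∑ i, b i * d i)
        + (∑ i, a i * d i) * (∑ i, b i * c i) := by
  have T1 : ∑ i, ∑ j, ∑ k, ∑ l : κ, a i * b j * c k * d l *
        ((if i = j then (1:ℝ) else 0) * (if k = l then (1:ℝ) else 0))
      = (∑ i, a i * b i) * (∑ i, c i * d i) := by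
    simp only [mul_ite, ite_mul, mul_one, mul_zero, zero_mul, one_mul,
      Finset.sum_ite_eq, Finset.sum_ite_eq', Finset.mem_univ, if_true]
    rw [Finset.sum_congr rfl fun i _ => Finset.sum_comm]
    simp only [Finset.sum_ite_eq, Finset.sum_ite_eq', Finset.mem_univ, if_true]
    rw [Finset.sum_mul_sum]
    exact Finset.sum_congr rfl fun i _ => Finset.sum_congr rfl fun k _ => by ring
  have T2 : ∑ i, ∑ j, ∑ k, ∑ l : κ, a i * b j * c k * d l *
        ((if i = k then (1:ℝ) else 0) * (if j = l then (1:ℝ) else 0))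
      = (∑ i, a i * c i) * (∑ i, b i * d i) := by
    simp only [mul_ite, ite_mul, mul_one, mul_zero, zero_mul, one_mul,
      Finset.sum_ite_eq, Finset.sum_ite_eq', Finset.mem_univ, if_true]
    rw [Finset.sum_mul_sum]
    exact Finset.sum_congr rfl fun i _ => Finset.sum_congr rfl fun j _ => by ring
  have T3 : ∑ i, ∑ j, ∑ k, ∑ l : κ, a i * b j * c k * d l *
        ((if i = l then (1:ℝ) else 0) * (if j = k then (1:ℝ) else 0))
      = (∑ i, a i * d i) * (∑ i, b i * c i) := by
    simp only [mul_ite, ite_mul, mul_one, mul_zero, zero_mul, one_mul,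
      Finset.sum_ite_eq, Finset.sum_ite_eq', Finset.mem_univ, if_true]
    rw [Finset.sum_mul_sum]
    exact Finset.sum_congr rfl fun i _ => Finset.sum_congr rfl fun j _ => by
      rw [Finset.sum_comm]
      simp only [Finset.sum_ite_eq, Finset.sum_ite_eq', Finset.mem_univ, if_true]; ring
  calc ∑ i, ∑ j, ∑ k, ∑ l, a i * b j * c k * d l *
        ((if i = j then (1:ℝ) else 0) * (if k = l then (1:ℝ) else 0)
          + (if i = k then (1:ℝ) else 0) * (if j = l then (1:ℝ) else 0)
          + (if i = l then (1:ℝ) else 0) * (if j = k then (1:ℝ) else 0))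
      = (∑ i, ∑ j, ∑ k, ∑ l : κ, a i * b j * c k * d l *
          ((if i = j then (1:ℝ) else 0) * (if k = l then (1:ℝ) else 0)))
        + ((∑ i, ∑ j, ∑ k, ∑ l : κ, a i * b j * c k * d l *
          ((if i = k then (1:ℝ) else 0) * (if j = l then (1:ℝ) else 0)))
        + (∑ i, ∑ j, ∑ k, ∑ l : κ, a i * b j * c k * d l *
          ((if i = l then (1:ℝ) else 0) * (if j = k then (1:ℝ) else 0)))) := by
        simp only [mul_add, Finset.sum_add_distrib]; ring
    _ = _ := by rw [T1, T2, T3]; ring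

lemma var_combo {Ω : Type*} [MeasurableSpace Ω] {μ : Measure Ω} [IsProbabilityMeasure μ]
    (A B C : Ω → ℝ) (p q t pa qb tc : ℝ)
    (hA : MemLp A 2 μ) (hB : MemLp B 2 μ) (hC : MemLp C 2 μ)
    (iAB : IndepFun A B μ) (iAC : IndepFun A C μ) (iBC : IndepFun B C μ)
    (EA : ∫ ω, A ω ∂μ = p) (EB : ∫ ω, B ω ∂μ = q) (EC : ∫ ω, C ω ∂μ = t)
    (EA2 : ∫ ω, A ω * A ω ∂μ = pa) (EB2 : ∫ ω, B ω * B ω ∂μ = qb)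
    (EC2 : ∫ ω, C ω * C ω ∂μ = tc) :
    variance (fun ω => 6 * A ω - 4 * B ω - 4 * C ω) μ
      = 36 * (pa - p ^ 2) + 16 * (qb - q ^ 2) + 16 * (tc - t ^ 2) := by
  have intA : Integrable A μ := hA.integrable one_le_two
  have intB : Integrable B μ := hB.integrable one_le_two
  have intC : Integrable C μ := hC.integrable one_le_two
  have intA2 : Integrable (fun ω => A ω * A ω) μ := int_mul2 hA hA
  have intB2 : Integrable (fun ω => B ω * B ω) μ := int_mul2 hB hB
  have intC2 : Integrable (fun ω => C ω * C ω) μ := int_mul2 hC hC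
  have intAB : Integrable (fun ω => A ω * B ω) μ := by exact iAB.integrable_mul intA intB
  have intAC : Integrable (fun ω => A ω * C ω) μ := by exact iAC.integrable_mul intA intC
  have intBC : Integrable (fun ω => B ω * C ω) μ := by exact iBC.integrable_mul intB intC
  have EABv : ∫ ω, A ω * B ω ∂μ = p * q := by
    rw [← EA, ← EB]; exact iAB.integral_mul_eq_mul_integral hA.1 hB.1
  have EACv : ∫ ω, A ω * C ω ∂μ = p * t := by
    rw [← EA, ← EC]; exact iAC.integral_mul_eq_mul_integral hA.1 hC.1
  have EBCv : ∫ ω, B ω * C ω ∂μ = q * t := by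
    rw [← EB, ← EC]; exact iBC.integral_mul_eq_mul_integral hB.1 hC.1
  have hW2 : MemLp (fun ω => 6 * A ω - 4 * B ω - 4 * C ω) 2 μ := by
    exact ((hA.const_mul 6).sub (hB.const_mul 4)).sub (hC.const_mul 4)
  rw [variance_eq_sub hW2]
  have i6A4B : Integrable (fun ω => 6 * A ω - 4 * B ω) μ := by
    exact (intA.const_mul 6).sub (intB.const_mul 4)
  have hEW : ∫ ω, (6 * A ω - 4 * B ω - 4 * C ω) ∂μ = 6 * p - 4 * q - 4 * t := by
    rw [integral_sub i6A4B (intC.const_mul 4),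
      integral_sub (intA.const_mul 6) (intB.const_mul 4),
      integral_const_mul, integral_const_mul, integral_const_mul, EA, EB, EC]
  have hsq : (fun ω => 6 * A ω - 4 * B ω - 4 * C ω) ^ 2
      = fun ω => 36 * (A ω * A ω) + 16 * (B ω * B ω) + 16 * (C ω * C ω)
          - 48 * (A ω * B ω) - 48 * (A ω * C ω) + 32 * (B ω * C ω) := by
    funext ω; simp only [Pi.pow_apply]; ring
  have j1 : Integrable (fun ω => 36 * (A ω * A ω) + 16 * (B ω * B ω)) μ := by
    exact (intA2.const_mul 36).add (intB2.const_mul 16)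
  have j2 : Integrable (fun ω => 36 * (A ω * A ω) + 16 * (B ω * B ω) + 16 * (C ω * C ω)) μ := by
    exact j1.add (intC2.const_mul 16)
  have j3 : Integrable (fun ω => 36 * (A ω * A ω) + 16 * (B ω * B ω) + 16 * (C ω * C ω)
      - 48 * (A ω * B ω)) μ := by exact j2.sub (intAB.const_mul 48)
  have j4 : Integrable (fun ω => 36 * (A ω * A ω) + 16 * (B ω * B ω) + 16 * (C ω * C ω)
      - 48 * (A ω * B ω) - 48 * (A ω * C ω)) μ := by exact j3.sub (intAC.const_mul 48)
  have hEW2 : ∫ ω, ((fun ω => 6 * A ω - 4 * B ω - 4 * C ω) ^ 2) ω ∂μ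
      = 36 * pa + 16 * qb + 16 * tc - 48 * (p * q) - 48 * (p * t) + 32 * (q * t) := by
    rw [hsq]
    show ∫ ω, (36 * (A ω * A ω) + 16 * (B ω * B ω) + 16 * (C ω * C ω)
          - 48 * (A ω * B ω) - 48 * (A ω * C ω) + 32 * (B ω * C ω)) ∂μ = _
    rw [integral_add j4 (intBC.const_mul 32), integral_sub j3 (intAC.const_mul 48),
      integral_sub j2 (intAB.const_mul 48), integral_add j1 (intC2.const_mul 16),
      integral_add (intA2.const_mul 36) (intB2.const_mul 16),
      integral_const_mul, integral_const_mul, integral_const_mul, integral_const_mul,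
      integral_const_mul, integral_const_mul, EA2, EB2, EC2, EABv, EACv, EBCv]
  calc ∫ ω, ((fun ω => 6 * A ω - 4 * B ω - 4 * C ω) ^ 2) ω ∂μ
        - (∫ ω, (6 * A ω - 4 * B ω - 4 * C ω) ∂μ) ^ 2
      = (36 * pa + 16 * qb + 16 * tc - 48 * (p * q) - 48 * (p * t) + 32 * (q * t))
        - (6 * p - 4 * q - 4 * t) ^ 2 := by rw [hEW2, hEW]
    _ = _ := by ring

variable {ι : Type*} [DecidableEq ι] {f : ι → Ω → ℝ}

lemma split_lemma (hindep : iIndepFun f μ)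
    (hmeas : ∀ i, Measurable (f i)) (t : ι) (T : Finset ι) (ht : t ∉ T) (k : ℕ) (n : ι → ℕ) :
    ∫ ω, (f t ω) ^ k * ∏ u ∈ T, (f u ω) ^ (n u) ∂μ
      = (∫ ω, (f t ω) ^ k ∂μ) * ∫ ω, ∏ u ∈ T, (f u ω) ^ (n u) ∂μ := by
  have hd : Disjoint ({t} : Finset ι) T := by simp [Finset.disjoint_left, ht]
  have h := hindep.indepFun_finset {t} T hd hmeas
  let φ : ({x // x ∈ ({t} : Finset ι)} → ℝ) → ℝ := fun v => (v ⟨t, Finset.mem_singleton_self t⟩) ^ k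
  let ψ : ({x // x ∈ T} → ℝ) → ℝ := fun v => ∏ u : {x // x ∈ T}, (v u) ^ (n u.1)
  have hφ : Measurable φ := (measurable_pi_apply _).pow_const k
  have hψ : Measurable ψ :=
    Finset.measurable_prod Finset.univ fun u _ => (measurable_pi_apply u).pow_const (n u.1)
  have hm1 : Measurable (fun ω (i : {x // x ∈ ({t} : Finset ι)}) => f i ω) :=
    measurable_pi_lambda _ fun i => hmeas i
  have hm2 : Measurable (fun ω (u : {x // x ∈ T}) => f u ω) :=
    measurable_pi_lambda _ fun u => hmeas u
  have h2 := (h.comp hφ hψ).integral_mul_eq_mul_integral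
    ((hφ.comp hm1).aestronglyMeasurable) ((hψ.comp hm2).aestronglyMeasurable)
  have e2 : (ψ ∘ fun ω (u : {x // x ∈ T}) => f u ω)
      = fun ω => ∏ u ∈ T, (f u ω) ^ (n u) := by
    funext ω
    exact Finset.prod_attach T fun u => (f u ω) ^ (n u)
  have e1 : (φ ∘ fun ω (i : {x // x ∈ ({t} : Finset ι)}) => f i ω) = fun ω => (f t ω) ^ k := rfl
  rw [e1, e2] at h2
  simpa [Pi.mul_apply] using h2

variable (hindep : iIndepFun f μ)
    (hmeas : ∀ i, Measurable (f i))
    (h1 : ∀ i, ∫ ω, f i ω ∂μ = 0) (h2 : ∀ i, ∫ ω, (f i ω) ^ 2 ∂μ = 1)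
    (h3 : ∀ i, ∫ ω, (f i ω) ^ 3 ∂μ = 0) (h4 : ∀ i, ∫ ω, (f i ω) ^ 4 ∂μ = 3)

include hindep hmeas h1 h2 in
lemma pair_int (t u : ι) :
    ∫ ω, f t ω * f u ω ∂μ = if t = u then (1:ℝ) else 0 := by
  rcases eq_or_ne t u with h | h
  · subst h; simp only [if_pos rfl]; rw [← h2 t]; congr 1; funext ω; ring
  · rw [if_neg h]
    have h' := (hindep.indepFun h).integral_mul_eq_mul_integral (hmeas t).aestronglyMeasurable
      (hmeas u).aestronglyMeasurable
    simpa [h1 t] using h'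

-- ∫ f t ^ k * f u ^ m  for t ≠ u
include hindep hmeas in
lemma split_pair (t u : ι) (h : t ≠ u) (k m : ℕ) :
    ∫ ω, (f t ω) ^ k * (f u ω) ^ m ∂μ
      = (∫ ω, (f t ω) ^ k ∂μ) * ∫ ω, (f u ω) ^ m ∂μ := by
  have := split_lemma hindep hmeas t {u} (by simp [h]) k (fun _ => m)
  simpa using this

include hindep hmeas h1 h2 in
lemma split_triple (t u v : ι) (htu : t ≠ u) (htv : t ≠ v) (huv : u ≠ v) (k : ℕ) :
    ∫ ω, (f t ω) ^ k * (f u ω * f v ω) ∂μ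
      = (∫ ω, (f t ω) ^ k ∂μ) * ((∫ ω, f u ω ∂μ) * ∫ ω, f v ω ∂μ) := by
  have := split_lemma hindep hmeas t {u, v} (by simp [htu, htv]) k (fun _ => 1)
  simp only [Finset.prod_pair huv, pow_one] at this
  rw [this]
  congr 1
  simpa using (hindep.indepFun huv).integral_mul_eq_mul_integral (hmeas u).aestronglyMeasurable
      (hmeas v).aestronglyMeasurable

include hindep hmeas in
lemma split_quad (t u v w : ι) (htu : t ≠ u) (htv : t ≠ v) (htw : t ≠ w) :
    ∫ ω, f t ω * (f u ω * f v ω * f w ω) ∂μ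
      = (∫ ω, f t ω ∂μ) * ∫ ω, f u ω * f v ω * f w ω ∂μ := by
  classical
  have hd : Disjoint ({t} : Finset ι) {u, v, w} := by
    simp [Finset.disjoint_left, htu, htv, htw]
  have h := hindep.indepFun_finset {t} {u, v, w} hd hmeas
  let φ : ({x // x ∈ ({t} : Finset ι)} → ℝ) → ℝ := fun z => z ⟨t, Finset.mem_singleton_self t⟩
  let ψ : ({x // x ∈ ({u, v, w} : Finset ι)} → ℝ) → ℝ := fun z =>
    z ⟨u, by simp⟩ * z ⟨v, by simp⟩ * z ⟨w, by simp⟩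
  have hφ : Measurable φ := measurable_pi_apply _
  have hψ : Measurable ψ := by unfold ψ; fun_prop
  have hm1 : Measurable (fun ω (i : {x // x ∈ ({t} : Finset ι)}) => f i ω) :=
    measurable_pi_lambda _ fun i => hmeas i
  have hm2 : Measurable (fun ω (i : {x // x ∈ ({u, v, w} : Finset ι)}) => f i ω) :=
    measurable_pi_lambda _ fun i => hmeas i
  have h2 := (h.comp hφ hψ).integral_mul_eq_mul_integral
    ((hφ.comp hm1).aestronglyMeasurable) ((hψ.comp hm2).aestronglyMeasurable)
  exact h2

include hindep hmeas h1 h2 h3 h4 in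
lemma wick4 (t u v w : ι) :
    ∫ ω, f t ω * f u ω * f v ω * f w ω ∂μ
      = (if t = u then (1:ℝ) else 0) * (if v = w then (1:ℝ) else 0)
        + (if t = v then (1:ℝ) else 0) * (if u = w then (1:ℝ) else 0)
        + (if t = w then (1:ℝ) else 0) * (if u = v then (1:ℝ) else 0) := by
  have key : ∀ (p q : ι), p ≠ q →
      ∫ ω, (f p ω) ^ 2 * (f q ω) ^ 2 ∂μ = 1 := fun p q h => by
    rw [split_pair hindep hmeas p q h 2 2, h2, h2, one_mul]
  have key3 : ∀ (p q : ι), p ≠ q →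
      ∫ ω, (f p ω) ^ 3 * (f q ω) ^ 1 ∂μ = 0 := fun p q h => by
    rw [split_pair hindep hmeas p q h 3 1, h3, zero_mul]
  have keyT : ∀ (p q s : ι), p ≠ q → p ≠ s → q ≠ s →
      ∫ ω, (f p ω) ^ 2 * (f q ω * f s ω) ∂μ = 0 := fun p q s hpq hps hqs => by
    rw [split_triple hindep hmeas h1 h2 p q s hpq hps hqs 2, h1, h1]; ring
  rcases eq_or_ne t u with htu | htu <;> rcases eq_or_ne v w with hvw | hvw
  · subst htu; subst hvw
    rcases eq_or_ne t v with htv | htv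
    · subst htv
      have e : ∫ ω, f t ω * f t ω * f t ω * f t ω ∂μ = ∫ ω, (f t ω) ^ 4 ∂μ := by
        congr 1; funext ω; ring
      rw [e, h4]; norm_num
    · have e : ∫ ω, f t ω * f t ω * f v ω * f v ω ∂μ
          = ∫ ω, (f t ω) ^ 2 * (f v ω) ^ 2 ∂μ := by congr 1; funext ω; ring
      rw [e, key t v htv]; simp [htv]
  · subst htu
    rcases eq_or_ne t v with htv | htv
    · subst htv
      have htw : t ≠ w := hvw
      have e : ∫ ω, f t ω * f t ω * f t ω * f w ω ∂μ
          = ∫ ω, (f t ω) ^ 3 * (f w ω) ^ 1 ∂μ := by congr 1; funext ω; ring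
      rw [e, key3 t w htw]; simp [hvw, htw]
    · rcases eq_or_ne t w with htw | htw
      · subst htw
        have e : ∫ ω, f t ω * f t ω * f v ω * f t ω ∂μ
            = ∫ ω, (f t ω) ^ 3 * (f v ω) ^ 1 ∂μ := by congr 1; funext ω; ring
        rw [e, key3 t v htv]; simp [htv, hvw]
      · have e : ∫ ω, f t ω * f t ω * f v ω * f w ω ∂μ
            = ∫ ω, (f t ω) ^ 2 * (f v ω * f w ω) ∂μ := by congr 1; funext ω; ring
        rw [e, keyT t v w htv htw hvw]; simp [htv, htw, hvw]
  · subst hvw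
    rcases eq_or_ne t v with htv | htv
    · subst htv
      have e : ∫ ω, f t ω * f u ω * f t ω * f t ω ∂μ
          = ∫ ω, (f t ω) ^ 3 * (f u ω) ^ 1 ∂μ := by congr 1; funext ω; ring
      rw [e, key3 t u htu]; simp [htu, Ne.symm htu]
    · rcases eq_or_ne u v with huv | huv
      · subst huv
        have e : ∫ ω, f t ω * f u ω * f u ω * f u ω ∂μ
            = ∫ ω, (f u ω) ^ 3 * (f t ω) ^ 1 ∂μ := by congr 1; funext ω; ring
        rw [e, key3 u t (Ne.symm htu)]; simp [htu, htv]
      · have e : ∫ ω, f t ω * f u ω * f v ω * f v ω ∂μ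
            = ∫ ω, (f v ω) ^ 2 * (f t ω * f u ω) ∂μ := by congr 1; funext ω; ring
        rw [e, keyT v t u (Ne.symm htv) (Ne.symm huv) htu]; simp [htu, htv, huv]
  · rcases eq_or_ne t v with htv | htv
    · subst htv
      have htw : t ≠ w := hvw
      rcases eq_or_ne u w with huw | huw
      · subst huw
        have e : ∫ ω, f t ω * f u ω * f t ω * f u ω ∂μ
            = ∫ ω, (f t ω) ^ 2 * (f u ω) ^ 2 ∂μ := by congr 1; funext ω; ring
        rw [e, key t u htu]; simp [htu, htw]
      · have e : ∫ ω, f t ω * f u ω * f t ω * f w ω ∂μ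
            = ∫ ω, (f t ω) ^ 2 * (f u ω * f w ω) ∂μ := by congr 1; funext ω; ring
        rw [e, keyT t u w htu htw huw]; simp [htu, htw, huw]
    · rcases eq_or_ne t w with htw | htw
      · subst htw
        rcases eq_or_ne u v with huv | huv
        · subst huv
          have e : ∫ ω, f t ω * f u ω * f u ω * f t ω ∂μ
              = ∫ ω, (f t ω) ^ 2 * (f u ω) ^ 2 ∂μ := by congr 1; funext ω; ring
          rw [e, key t u htu]; simp [htu, htv]
        · have e : ∫ ω, f t ω * f u ω * f v ω * f t ω ∂μ
              = ∫ ω, (f t ω) ^ 2 * (f u ω * f v ω) ∂μ := by congr 1; funext ω; ring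
          rw [e, keyT t u v htu htv huv]; simp [htu, htv, huv]
      · have e : ∫ ω, f t ω * f u ω * f v ω * f w ω ∂μ
            = ∫ ω, f t ω * (f u ω * f v ω * f w ω) ∂μ := by congr 1; funext ω; ring
        rw [e, split_quad hindep hmeas t u v w htu htv htw, h1, zero_mul]
        simp [htu, htv, htw]

variable (hL4 : ∀ i, MemLp (f i) 4 μ)
variable {κ : Type*} [Fintype κ] [DecidableEq κ]

include hindep hmeas h1 h2 hL4 in
lemma E2gen (em : κ → ι) (hem : Function.Injective em) (a b : κ → ℝ) :
    ∫ ω, (∑ i, a i * f (em i) ω) * (∑ j, b j * f (em j) ω) ∂μ = ∑ i, a i * b i := by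
  have intg : ∀ (i j : κ), Integrable (fun ω => a i * b j * (f (em i) ω * f (em j) ω)) μ :=
    fun i j => (int_mul2 ((hL4 (em i)).mono_exponent (by norm_num))
      ((hL4 (em j)).mono_exponent (by norm_num))).const_mul _
  calc ∫ ω, (∑ i, a i * f (em i) ω) * (∑ j, b j * f (em j) ω) ∂μ
      = ∫ ω, ∑ i, ∑ j, a i * b j * (f (em i) ω * f (em j) ω) ∂μ := by
        congr 1; funext ω; rw [Finset.sum_mul_sum]
        exact sum_congr rfl fun i _ => sum_congr rfl fun j _ => by ring
    _ = ∑ i, ∑ j, a i * b j * ∫ ω, f (em i) ω * f (em j) ω ∂μ := by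
        rw [integral_finset_sum _ (fun i _ => integrable_finset_sum _ (fun j _ => intg i j))]
        exact sum_congr rfl fun i _ => by
          rw [integral_finset_sum _ (fun j _ => intg i j)]
          exact sum_congr rfl fun j _ => integral_const_mul _ _
    _ = ∑ i, ∑ j, a i * b j * (if i = j then (1:ℝ) else 0) := by
        refine sum_congr rfl fun i _ => sum_congr rfl fun j _ => ?_
        rw [pair_int hindep hmeas h1 h2 (em i) (em j)]
        simp [hem.eq_iff]
    _ = ∑ i, a i * b i := by simp [mul_ite]

include hindep hmeas h1 h2 h3 h4 hL4 in
lemma E4gen (em : κ → ι) (hem : Function.Injective em) (a b c d : κ → ℝ) :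
    ∫ ω, (∑ i, a i * f (em i) ω) * (∑ j, b j * f (em j) ω) * (∑ k, c k * f (em k) ω)
        * (∑ l, d l * f (em l) ω) ∂μ
      = (∑ i, a i * b i) * (∑ i, c i * d i) + (∑ i, a i * c i) * (∑ i, b i * d i)
        + (∑ i, a i * d i) * (∑ i, b i * c i) := by
  have intg : ∀ (i j k l : κ), Integrable (fun ω => d i * c j * b k * a l *
      (f (em i) ω * f (em j) ω * f (em k) ω * f (em l) ω)) μ :=
    fun i j k l => (int_mul4 (hL4 (em i)) (hL4 (em j)) (hL4 (em k)) (hL4 (em l))).const_mul _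
  have mc : ∀ u v : κ → ℝ, ∑ i, u i * v i = ∑ i, v i * u i :=
    fun u v => Finset.sum_congr rfl fun i _ => mul_comm _ _
  calc ∫ ω, (∑ i, a i * f (em i) ω) * (∑ j, b j * f (em j) ω) * (∑ k, c k * f (em k) ω)
        * (∑ l, d l * f (em l) ω) ∂μ
      = ∫ ω, ∑ i, ∑ j, ∑ k, ∑ l, d i * c j * b k * a l *
          (f (em i) ω * f (em j) ω * f (em k) ω * f (em l) ω) ∂μ := by
        congr 1; funext ω
        simp only [Finset.sum_mul, Finset.mul_sum]
        refine sum_congr rfl fun i _ => sum_congr rfl fun j _ => sum_congr rfl fun k _ =>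
          sum_congr rfl fun l _ => by ring
    _ = ∑ i, ∑ j, ∑ k, ∑ l, d i * c j * b k * a l *
          ∫ ω, f (em i) ω * f (em j) ω * f (em k) ω * f (em l) ω ∂μ := by
        rw [integral_finset_sum _ (fun i _ => integrable_finset_sum _ (fun j _ =>
          integrable_finset_sum _ (fun k _ => integrable_finset_sum _ (fun l _ => intg i j k l))))]
        refine sum_congr rfl fun i _ => ?_
        rw [integral_finset_sum _ (fun j _ =>
          integrable_finset_sum _ (fun k _ => integrable_finset_sum _ (fun l _ => intg i j k l)))]
        refine sum_congr rfl fun j _ => ?_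
        rw [integral_finset_sum _ (fun k _ => integrable_finset_sum _ (fun l _ => intg i j k l))]
        refine sum_congr rfl fun k _ => ?_
        rw [integral_finset_sum _ (fun l _ => intg i j k l)]
        exact sum_congr rfl fun l _ => integral_const_mul _ _
    _ = ∑ i, ∑ j, ∑ k, ∑ l, d i * c j * b k * a l *
          ((if i = j then (1:ℝ) else 0) * (if k = l then (1:ℝ) else 0)
            + (if i = k then (1:ℝ) else 0) * (if j = l then (1:ℝ) else 0)
            + (if i = l then (1:ℝ) else 0) * (if j = k then (1:ℝ) else 0)) := by
        refine sum_congr rfl fun i _ => sum_congr rfl fun j _ => sum_congr rfl fun k _ =>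
          sum_congr rfl fun l _ => ?_
        rw [wick4 hindep hmeas h1 h2 h3 h4 (em i) (em j) (em k) (em l)]
        simp [hem.eq_iff]
    _ = (∑ i, d i * c i) * (∑ i, b i * a i) + (∑ i, d i * b i) * (∑ i, c i * a i)
        + (∑ i, d i * a i) * (∑ i, c i * b i) := sum_identity d c b a
    _ = _ := by rw [mc d c, mc b a, mc d b, mc c a, mc d a, mc c b]; ring

end helpers

theorem l4_alternative_variance {Ω : Type*} [MeasurableSpace Ω]
    (μ : Measure Ω) [IsProbabilityMeasure μ]
    (D : ℕ) (r : Fin 3 → Fin D → Ω → ℝ) (x y : Fin D → ℝ)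
    (hmeas : ∀ j i, Measurable (r j i))
    (hindep : iIndepFun
      (fun p : Fin 3 × Fin D => r p.1 p.2) μ)
    (h1 : ∀ j i, ∫ ω, r j i ω ∂μ = 0)
    (h2 : ∀ j i, ∫ ω, (r j i ω) ^ 2 ∂μ = 1)
    (h3 : ∀ j i, ∫ ω, (r j i ω) ^ 3 ∂μ = 0)
    (h4 : ∀ j i, ∫ ω, (r j i ω) ^ 4 ∂μ = 3) :
    variance (fun ω =>
        6 * ((∑ i, (x i) ^ 2 * r 0 i ω) * (∑ i, (y i) ^ 2 * r 0 i ω))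
          - 4 * ((∑ i, (x i) ^ 3 * r 1 i ω) * (∑ i, y i * r 1 i ω))
          - 4 * ((∑ i, x i * r 2 i ω) * (∑ i, (y i) ^ 3 * r 2 i ω))) μ
      = 36 * ((∑ i, (x i) ^ 4) * (∑ i, (y i) ^ 4) + (∑ i, (x i) ^ 2 * (y i) ^ 2) ^ 2)
        + 16 * ((∑ i, (x i) ^ 6) * (∑ i, (y i) ^ 2) + (∑ i, (x i) ^ 3 * y i) ^ 2)
        + 16 * ((∑ i, (x i) ^ 2) * (∑ i, (y i) ^ 6) + (∑ i, x i * (y i) ^ 3) ^ 2) := by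
  classical
  set f : Fin 3 × Fin D → Ω → ℝ := fun p => r p.1 p.2 with hf
  have hmeas' : ∀ p, Measurable (f p) := fun p => hmeas p.1 p.2
  have h1' : ∀ p, ∫ ω, f p ω ∂μ = 0 := fun p => h1 p.1 p.2
  have h2' : ∀ p, ∫ ω, (f p ω) ^ 2 ∂μ = 1 := fun p => h2 p.1 p.2
  have h3' : ∀ p, ∫ ω, (f p ω) ^ 3 ∂μ = 0 := fun p => h3 p.1 p.2
  have h4' : ∀ p, ∫ ω, (f p ω) ^ 4 ∂μ = 3 := fun p => h4 p.1 p.2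
  have hL4 : ∀ p, MemLp (f p) 4 μ := by
    intro p
    refine mem4_of (hmeas' p) ?_
    by_contra hc
    have := h4' p
    rw [integral_undef hc] at this
    norm_num at this
  -- block embeddings
  have hem : ∀ j : Fin 3, Function.Injective (fun i : Fin D => ((j, i) : Fin 3 × Fin D)) :=
    fun j i1 i2 h => by simpa using congrArg Prod.snd h
  -- the six linear forms, as MemLp 4 functions
  have hSum : ∀ (j : Fin 3) (a : Fin D → ℝ),
      MemLp (fun ω => ∑ i, a i * r j i ω) 4 μ := fun j a =>
    memLp_finsetSum _ fun i _ => (hL4 (j, i)).const_mul (a i)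
  -- independence of products across blocks
  have memj : ∀ (j : Fin 3) (i : Fin D),
      ((j, i) : Fin 3 × Fin D) ∈ Finset.univ.image (fun i : Fin D => ((j, i) : Fin 3 × Fin D)) :=
    fun j i => Finset.mem_image_of_mem _ (Finset.mem_univ i)
  have indep_blocks : ∀ (j k : Fin 3), j ≠ k → ∀ (a b c d : Fin D → ℝ),
      IndepFun (fun ω => (∑ i, a i * r j i ω) * (∑ i, b i * r j i ω))
        (fun ω => (∑ i, c i * r k i ω) * (∑ i, d i * r k i ω)) μ := by
    intro j k hjk a b c d
    have hd : Disjoint (Finset.univ.image (fun i : Fin D => ((j, i) : Fin 3 × Fin D)))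
        (Finset.univ.image (fun i : Fin D => ((k, i) : Fin 3 × Fin D))) := by
      simp only [Finset.disjoint_left, Finset.mem_image, Finset.mem_univ, true_and,
        forall_exists_index]
      rintro p i1 rfl ⟨i2, hi2⟩
      exact hjk (congrArg Prod.fst hi2).symm
    have H := hindep.indepFun_finset _ _ hd hmeas'
    let φ : ({p // p ∈ Finset.univ.image (fun i : Fin D => ((j, i) : Fin 3 × Fin D))} → ℝ) → ℝ :=
      fun v => (∑ i, a i * v ⟨(j, i), memj j i⟩) * (∑ i, b i * v ⟨(j, i), memj j i⟩)
    let ψ : ({p // p ∈ Finset.univ.image (fun i : Fin D => ((k, i) : Fin 3 × Fin D))} → ℝ) → ℝ :=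
      fun v => (∑ i, c i * v ⟨(k, i), memj k i⟩) * (∑ i, d i * v ⟨(k, i), memj k i⟩)
    have hφ : Measurable φ := by
      apply Measurable.mul <;>
        exact Finset.measurable_sum _ fun i _ => (measurable_pi_apply _).const_mul _
    have hψ : Measurable ψ := by
      apply Measurable.mul <;>
        exact Finset.measurable_sum _ fun i _ => (measurable_pi_apply _).const_mul _
    exact H.comp hφ hψ
  have EA := E2gen hindep hmeas' h1' h2' hL4 (fun i : Fin D => ((0 : Fin 3), i)) (hem 0)
    (fun i => x i ^ 2) (fun i => y i ^ 2)
  have EB := E2gen hindep hmeas' h1' h2' hL4 (fun i : Fin D => ((1 : Fin 3), i)) (hem 1)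
    (fun i => x i ^ 3) (fun i => y i)
  have EC := E2gen hindep hmeas' h1' h2' hL4 (fun i : Fin D => ((2 : Fin 3), i)) (hem 2)
    (fun i => x i) (fun i => y i ^ 3)
  have vA := E4gen hindep hmeas' h1' h2' h3' h4' hL4 (fun i : Fin D => ((0 : Fin 3), i)) (hem 0)
    (fun i => x i ^ 2) (fun i => y i ^ 2) (fun i => x i ^ 2) (fun i => y i ^ 2)
  have vB := E4gen hindep hmeas' h1' h2' h3' h4' hL4 (fun i : Fin D => ((1 : Fin 3), i)) (hem 1)
    (fun i => x i ^ 3) (fun i => y i) (fun i => x i ^ 3) (fun i => y i)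
  have vC := E4gen hindep hmeas' h1' h2' h3' h4' hL4 (fun i : Fin D => ((2 : Fin 3), i)) (hem 2)
    (fun i => x i) (fun i => y i ^ 3) (fun i => x i) (fun i => y i ^ 3)
  have hA : MemLp (fun ω => (∑ i, x i ^ 2 * r 0 i ω) * (∑ i, y i ^ 2 * r 0 i ω)) 2 μ :=
    mem2_mul (hSum 0 fun i => x i ^ 2) (hSum 0 fun i => y i ^ 2)
  have hB : MemLp (fun ω => (∑ i, x i ^ 3 * r 1 i ω) * (∑ i, y i * r 1 i ω)) 2 μ :=
    mem2_mul (hSum 1 fun i => x i ^ 3) (hSum 1 fun i => y i)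
  have hC : MemLp (fun ω => (∑ i, x i * r 2 i ω) * (∑ i, y i ^ 3 * r 2 i ω)) 2 μ :=
    mem2_mul (hSum 2 fun i => x i) (hSum 2 fun i => y i ^ 3)
  have EA2 : ∫ ω, ((∑ i, x i ^ 2 * r 0 i ω) * (∑ i, y i ^ 2 * r 0 i ω))
      * ((∑ i, x i ^ 2 * r 0 i ω) * (∑ i, y i ^ 2 * r 0 i ω)) ∂μ
      = (∑ i, x i ^ 2 * y i ^ 2) * (∑ i, x i ^ 2 * y i ^ 2)
        + (∑ i, x i ^ 2 * x i ^ 2) * (∑ i, y i ^ 2 * y i ^ 2)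
        + (∑ i, x i ^ 2 * y i ^ 2) * (∑ i, y i ^ 2 * x i ^ 2) := by
    have e : (fun ω => ((∑ i, x i ^ 2 * r 0 i ω) * (∑ i, y i ^ 2 * r 0 i ω))
        * ((∑ i, x i ^ 2 * r 0 i ω) * (∑ i, y i ^ 2 * r 0 i ω)))
        = fun ω => (∑ i, x i ^ 2 * r 0 i ω) * (∑ i, y i ^ 2 * r 0 i ω)
          * (∑ i, x i ^ 2 * r 0 i ω) * (∑ i, y i ^ 2 * r 0 i ω) := by
      funext ω; ring
    rw [e]; exact vA
  have EB2 : ∫ ω, ((∑ i, x i ^ 3 * r 1 i ω) * (∑ i, y i * r 1 i ω))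
      * ((∑ i, x i ^ 3 * r 1 i ω) * (∑ i, y i * r 1 i ω)) ∂μ
      = (∑ i, x i ^ 3 * y i) * (∑ i, x i ^ 3 * y i)
        + (∑ i, x i ^ 3 * x i ^ 3) * (∑ i, y i * y i)
        + (∑ i, x i ^ 3 * y i) * (∑ i, y i * x i ^ 3) := by
    have e : (fun ω => ((∑ i, x i ^ 3 * r 1 i ω) * (∑ i, y i * r 1 i ω))
        * ((∑ i, x i ^ 3 * r 1 i ω) * (∑ i, y i * r 1 i ω)))
        = fun ω => (∑ i, x i ^ 3 * r 1 i ω) * (∑ i, y i * r 1 i ω)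
          * (∑ i, x i ^ 3 * r 1 i ω) * (∑ i, y i * r 1 i ω) := by
      funext ω; ring
    rw [e]; exact vB
  have EC2 : ∫ ω, ((∑ i, x i * r 2 i ω) * (∑ i, y i ^ 3 * r 2 i ω))
      * ((∑ i, x i * r 2 i ω) * (∑ i, y i ^ 3 * r 2 i ω)) ∂μ
      = (∑ i, x i * y i ^ 3) * (∑ i, x i * y i ^ 3)
        + (∑ i, x i * x i) * (∑ i, y i ^ 3 * y i ^ 3)
        + (∑ i, x i * y i ^ 3) * (∑ i, y i ^ 3 * x i) := by
    have e : (fun ω => ((∑ i, x i * r 2 i ω) * (∑ i, y i ^ 3 * r 2 i ω))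
        * ((∑ i, x i * r 2 i ω) * (∑ i, y i ^ 3 * r 2 i ω)))
        = fun ω => (∑ i, x i * r 2 i ω) * (∑ i, y i ^ 3 * r 2 i ω)
          * (∑ i, x i * r 2 i ω) * (∑ i, y i ^ 3 * r 2 i ω) := by
      funext ω; ring
    rw [e]; exact vC
  have iAB := indep_blocks 0 1 (by decide) (fun i => x i ^ 2) (fun i => y i ^ 2)
    (fun i => x i ^ 3) (fun i => y i)
  have iAC := indep_blocks 0 2 (by decide) (fun i => x i ^ 2) (fun i => y i ^ 2)
    (fun i => x i) (fun i => y i ^ 3)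
  have iBC := indep_blocks 1 2 (by decide) (fun i => x i ^ 3) (fun i => y i)
    (fun i => x i) (fun i => y i ^ 3)
  have main := var_combo (fun ω => (∑ i, x i ^ 2 * r 0 i ω) * (∑ i, y i ^ 2 * r 0 i ω))
    (fun ω => (∑ i, x i ^ 3 * r 1 i ω) * (∑ i, y i * r 1 i ω))
    (fun ω => (∑ i, x i * r 2 i ω) * (∑ i, y i ^ 3 * r 2 i ω))
    _ _ _ _ _ _ hA hB hC iAB iAC iBC EA EB EC EA2 EB2 EC2
  have c1 : ∑ i, x i ^ 2 * x i ^ 2 = ∑ i, x i ^ 4 :=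
    Finset.sum_congr rfl fun i _ => by ring
  have c2 : ∑ i, y i ^ 2 * y i ^ 2 = ∑ i, y i ^ 4 :=
    Finset.sum_congr rfl fun i _ => by ring
  have c3 : ∑ i, y i ^ 2 * x i ^ 2 = ∑ i, x i ^ 2 * y i ^ 2 :=
    Finset.sum_congr rfl fun i _ => by ring
  have c4 : ∑ i, x i ^ 3 * x i ^ 3 = ∑ i, x i ^ 6 :=
    Finset.sum_congr rfl fun i _ => by ring
  have c5 : ∑ i, y i * y i = ∑ i, y i ^ 2 :=
    Finset.sum_congr rfl fun i _ => by ring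
  have c6 : ∑ i, y i * x i ^ 3 = ∑ i, x i ^ 3 * y i :=
    Finset.sum_congr rfl fun i _ => by ring
  have c7 : ∑ i, x i * x i = ∑ i, x i ^ 2 :=
    Finset.sum_congr rfl fun i _ => by ring
  have c8 : ∑ i, y i ^ 3 * y i ^ 3 = ∑ i, y i ^ 6 :=
    Finset.sum_congr rfl fun i _ => by ring
  have c9 : ∑ i, y i ^ 3 * x i = ∑ i, x i * y i ^ 3 :=
    Finset.sum_congr rfl fun i _ => by ring
  rw [c1, c2, c3, c4, c5, c6, c7, c8, c9] at main
  calc variance (fun ω =>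
        6 * ((∑ i, (x i) ^ 2 * r 0 i ω) * (∑ i, (y i) ^ 2 * r 0 i ω))
          - 4 * ((∑ i, (x i) ^ 3 * r 1 i ω) * (∑ i, y i * r 1 i ω))
          - 4 * ((∑ i, x i * r 2 i ω) * (∑ i, (y i) ^ 3 * r 2 i ω))) μ
      = 36 * ((∑ i, x i ^ 2 * y i ^ 2) * (∑ i, x i ^ 2 * y i ^ 2)
            + (∑ i, x i ^ 4) * (∑ i, y i ^ 4)
            + (∑ i, x i ^ 2 * y i ^ 2) * (∑ i, x i ^ 2 * y i ^ 2)
            - (∑ i, x i ^ 2 * y i ^ 2) ^ 2)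
        + 16 * ((∑ i, x i ^ 3 * y i) * (∑ i, x i ^ 3 * y i)
            + (∑ i, x i ^ 6) * (∑ i, y i ^ 2)
            + (∑ i, x i ^ 3 * y i) * (∑ i, x i ^ 3 * y i)
            - (∑ i, x i ^ 3 * y i) ^ 2)
        + 16 * ((∑ i, x i * y i ^ 3) * (∑ i, x i * y i ^ 3)
            + (∑ i, x i ^ 2) * (∑ i, y i ^ 6)
            + (∑ i, x i * y i ^ 3) * (∑ i, x i * y i ^ 3)
            - (∑ i, x i * y i ^ 3) ^ 2) := main
    _ = _ := by ring
end

section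
/- Let r_1, ..., r_D be i.i.d. standard normal and x, y ∈ ℝ^D. Define u_m = ∑ x_i^m r_i and v_m = ∑ y_i^m r_i for m = 1,...,5, and X = ∑ x_i^6 + ∑ y_i^6 - 20 u_3 v_3 + 15 u_2 v_4 + 15 u_4 v_2 - 6 u_1 v_5 - 6 u_5 v_1. Then E[X] = ∑_{i=1}^D (x_i - y_i)^6. -/
open Finset MeasureTheory ProbabilityTheory

lemma key_prod {Ω : Type*} [MeasurableSpace Ω]
    (μ : Measure Ω) [IsProbabilityMeasure μ]
    (D : ℕ) (r : Fin D → Ω → ℝ) (a b : Fin D → ℝ)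
    (hmeas : ∀ i, Measurable (r i))
    (hindep : iIndepFun r μ)
    (h1 : ∀ i, ∫ ω, r i ω ∂μ = 0)
    (h2 : ∀ i, ∫ ω, (r i ω) ^ 2 ∂μ = 1) :
    ∫ ω, (∑ i, a i * r i ω) * (∑ j, b j * r j ω) ∂μ = ∑ i, a i * b i := by
  have hL2 : ∀ i, MemLp (r i) 2 μ := by
    intro i
    rw [memLp_two_iff_integrable_sq (hmeas i).aestronglyMeasurable]
    by_contra h
    have := h2 i
    rw [integral_undef h] at this
    simp at this
  have hint : ∀ i j, Integrable (fun ω => r i ω * r j ω) μ := by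
    intro i j
    have := ((hL2 i).smul (hL2 j) (hpqr := ⟨by simp [ENNReal.inv_two_add_inv_two]⟩) :
      MemLp ((r j) • (r i)) 1 μ)
    have h' := this.integrable le_rfl
    simpa [Pi.smul_apply, smul_eq_mul, mul_comm, Pi.mul_def] using h'
  have hint1 : ∀ i, Integrable (r i) μ := fun i => (hL2 i).integrable one_le_two
  have hmix : ∀ i j, ∫ ω, r i ω * r j ω ∂μ = if i = j then 1 else 0 := by
    intro i j
    by_cases h : i = j
    · subst h; simp only [if_pos rfl, ← sq]; exact h2 i
    · rw [if_neg h]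
      have hij : IndepFun (r i) (r j) μ := hindep.indepFun h
      have := IndepFun.integral_mul_eq_mul_integral hij (hint1 i).1 (hint1 j).1
      have e : (∫ ω, r i ω * r j ω ∂μ) = integral μ (r i * r j) := rfl
      rw [e, this, h1 i, zero_mul]
  have expand : ∀ ω, (∑ i, a i * r i ω) * (∑ j, b j * r j ω)
      = ∑ i, ∑ j, (a i * b j) * (r i ω * r j ω) := by
    intro ω
    rw [Finset.sum_mul_sum]
    exact Finset.sum_congr rfl fun i _ => Finset.sum_congr rfl fun j _ => by ring
  simp_rw [expand]
  rw [integral_finset_sum _ fun i _ => integrable_finset_sum _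
      fun j _ => ((hint i j).const_mul _)]
  have : ∀ i ∈ Finset.univ, ∫ ω, ∑ j, (a i * b j) * (r i ω * r j ω) ∂μ = a i * b i := by
    intro i _
    rw [integral_finset_sum _ fun j _ => ((hint i j).const_mul _)]
    have : ∀ j ∈ Finset.univ, ∫ ω, (a i * b j) * (r i ω * r j ω) ∂μ
        = (a i * b j) * if i = j then (1:ℝ) else 0 := by
      intro j _
      rw [integral_const_mul, hmix i j]
    rw [Finset.sum_congr rfl this]
    simp
  exact Finset.sum_congr rfl this

lemma prod_int {Ω : Type*} [MeasurableSpace Ω]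
    (μ : Measure Ω) [IsProbabilityMeasure μ]
    (D : ℕ) (r : Fin D → Ω → ℝ) (a b : Fin D → ℝ)
    (hmeas : ∀ i, Measurable (r i))
    (h2 : ∀ i, ∫ ω, (r i ω) ^ 2 ∂μ = 1) :
    Integrable (fun ω => (∑ i, a i * r i ω) * (∑ j, b j * r j ω)) μ := by
  have hL2 : ∀ (c : Fin D → ℝ), MemLp (fun ω => ∑ i, c i * r i ω) 2 μ := by
    intro c
    apply memLp_finset_sum (univ : Finset (Fin D)) (fun i _ => ?_)
    have : MemLp (r i) 2 μ := by
      rw [memLp_two_iff_integrable_sq (hmeas i).aestronglyMeasurable]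
      by_contra h
      have := h2 i
      rw [integral_undef h] at this
      simp at this
    exact this.const_mul (c i)
  have := ((hL2 a).smul (hL2 b) (hpqr := ⟨by simp [ENNReal.inv_two_add_inv_two]⟩) :
    MemLp ((fun ω => ∑ j, b j * r j ω) • (fun ω => ∑ i, a i * r i ω)) 1 μ)
  have h' := this.integrable le_rfl
  simpa [Pi.smul_apply, smul_eq_mul, mul_comm, Pi.mul_def] using h'

set_option maxHeartbeats 2000000 in
theorem l6_estimator_unbiased {Ω : Type*} [MeasurableSpace Ω]
    (μ : Measure Ω) [IsProbabilityMeasure μ]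
    (D : ℕ) (r : Fin D → Ω → ℝ) (x y : Fin D → ℝ)
    (hmeas : ∀ i, Measurable (r i))
    (hindep : iIndepFun r μ)
    (h1 : ∀ i, ∫ ω, r i ω ∂μ = 0)
    (h2 : ∀ i, ∫ ω, (r i ω) ^ 2 ∂μ = 1)
    (h3 : ∀ i, ∫ ω, (r i ω) ^ 3 ∂μ = 0)
    (h4 : ∀ i, ∫ ω, (r i ω) ^ 4 ∂μ = 3) :
    ∫ ω, (∑ i, (x i) ^ 6 + ∑ i, (y i) ^ 6
        - 20 * ((∑ i, (x i) ^ 3 * r i ω) * (∑ i, (y i) ^ 3 * r i ω))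
        + 15 * ((∑ i, (x i) ^ 2 * r i ω) * (∑ i, (y i) ^ 4 * r i ω))
        + 15 * ((∑ i, (x i) ^ 4 * r i ω) * (∑ i, (y i) ^ 2 * r i ω))
        - 6 * ((∑ i, x i * r i ω) * (∑ i, (y i) ^ 5 * r i ω))
        - 6 * ((∑ i, (x i) ^ 5 * r i ω) * (∑ i, y i * r i ω))) ∂μ
      = ∑ i, (x i - y i) ^ 6 := by
  have I1 := prod_int μ D r (fun i => x i ^ 3) (fun i => y i ^ 3) hmeas h2
  have I2 := prod_int μ D r (fun i => x i ^ 2) (fun i => y i ^ 4) hmeas h2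
  have I3 := prod_int μ D r (fun i => x i ^ 4) (fun i => y i ^ 2) hmeas h2
  have I4 := prod_int μ D r (fun i => x i) (fun i => y i ^ 5) hmeas h2
  have I5 := prod_int μ D r (fun i => x i ^ 5) (fun i => y i) hmeas h2
  have K1 := key_prod μ D r (fun i => x i ^ 3) (fun i => y i ^ 3) hmeas hindep h1 h2
  have K2 := key_prod μ D r (fun i => x i ^ 2) (fun i => y i ^ 4) hmeas hindep h1 h2
  have K3 := key_prod μ D r (fun i => x i ^ 4) (fun i => y i ^ 2) hmeas hindep h1 h2
  have K4 := key_prod μ D r (fun i => x i) (fun i => y i ^ 5) hmeas hindep h1 h2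
  have K5 := key_prod μ D r (fun i => x i ^ 5) (fun i => y i) hmeas hindep h1 h2
  beta_reduce at I1 I2 I3 I4 I5 K1 K2 K3 K4 K5
  have E1 := MeasureTheory.integral_sub
    (f := fun ω => ∑ i, (x i) ^ 6 + ∑ i, (y i) ^ 6
        - 20 * ((∑ i, (x i) ^ 3 * r i ω) * (∑ i, (y i) ^ 3 * r i ω))
        + 15 * ((∑ i, (x i) ^ 2 * r i ω) * (∑ i, (y i) ^ 4 * r i ω))
        + 15 * ((∑ i, (x i) ^ 4 * r i ω) * (∑ i, (y i) ^ 2 * r i ω))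
        - 6 * ((∑ i, x i * r i ω) * (∑ i, (y i) ^ 5 * r i ω)))
    (g := fun ω => 6 * ((∑ i, (x i) ^ 5 * r i ω) * (∑ i, y i * r i ω)))
    (((((integrable_const _).sub (I1.const_mul 20)).add (I2.const_mul 15)).add
        (I3.const_mul 15)).sub (I4.const_mul 6)) (I5.const_mul 6)
  have E2 := MeasureTheory.integral_sub
    (f := fun ω => ∑ i, (x i) ^ 6 + ∑ i, (y i) ^ 6
        - 20 * ((∑ i, (x i) ^ 3 * r i ω) * (∑ i, (y i) ^ 3 * r i ω))
        + 15 * ((∑ i, (x i) ^ 2 * r i ω) * (∑ i, (y i) ^ 4 * r i ω))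
        + 15 * ((∑ i, (x i) ^ 4 * r i ω) * (∑ i, (y i) ^ 2 * r i ω)))
    (g := fun ω => 6 * ((∑ i, x i * r i ω) * (∑ i, (y i) ^ 5 * r i ω)))
    ((((integrable_const _).sub (I1.const_mul 20)).add (I2.const_mul 15)).add
        (I3.const_mul 15)) (I4.const_mul 6)
  have E3 := MeasureTheory.integral_add
    (f := fun ω => ∑ i, (x i) ^ 6 + ∑ i, (y i) ^ 6
        - 20 * ((∑ i, (x i) ^ 3 * r i ω) * (∑ i, (y i) ^ 3 * r i ω))
        + 15 * ((∑ i, (x i) ^ 2 * r i ω) * (∑ i, (y i) ^ 4 * r i ω)))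
    (g := fun ω => 15 * ((∑ i, (x i) ^ 4 * r i ω) * (∑ i, (y i) ^ 2 * r i ω)))
    (((integrable_const _).sub (I1.const_mul 20)).add (I2.const_mul 15)) (I3.const_mul 15)
  have E4 := MeasureTheory.integral_add
    (f := fun ω => ∑ i, (x i) ^ 6 + ∑ i, (y i) ^ 6
        - 20 * ((∑ i, (x i) ^ 3 * r i ω) * (∑ i, (y i) ^ 3 * r i ω)))
    (g := fun ω => 15 * ((∑ i, (x i) ^ 2 * r i ω) * (∑ i, (y i) ^ 4 * r i ω)))
    ((integrable_const _).sub (I1.const_mul 20)) (I2.const_mul 15)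
  have E5 := MeasureTheory.integral_sub
    (f := fun _ => ∑ i, (x i) ^ 6 + ∑ i, (y i) ^ 6)
    (g := fun ω => 20 * ((∑ i, (x i) ^ 3 * r i ω) * (∑ i, (y i) ^ 3 * r i ω)))
    (integrable_const _) (I1.const_mul 20)
  rw [E1, E2, E3, E4, E5, integral_const, integral_const_mul, integral_const_mul,
      integral_const_mul, integral_const_mul, integral_const_mul, K1, K2, K3, K4, K5]
  simp only [Measure.real, measure_univ, ENNReal.toReal_one, smul_eq_mul, one_smul]
  rw [show ∑ i, (x i - y i) ^ 6 = ∑ i, ((x i ^ 6 + y i ^ 6 - 20 * (x i ^ 3 * y i ^ 3)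
      + 15 * (x i ^ 2 * y i ^ 4) + 15 * (x i ^ 4 * y i ^ 2) - 6 * (x i * y i ^ 5))
      - 6 * (x i ^ 5 * y i)) from Finset.sum_congr rfl fun i _ => by ring]
  simp only [Finset.sum_add_distrib, Finset.sum_sub_distrib, Finset.mul_sum, one_mul]
end
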